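/- arXiv:1902.07758 — 2 statements merged into one kernel-verified Lean document; each statement's English description precedes it below -/
import Mathlib

section
/- Let G be a finite group, K a subgroup of G, and g ∈ G. Consider the action of G on the left coset space G/K by left multiplication. Then the number of cosets fixed by g, multiplied by |K|, equals |C_G(g)| multiplied by the number of elements k ∈ K that are conjugate to g in G; that is, |Fix_{G/K}(g)| · |K| = |C_G(g)| · |{k ∈ K : k is G-conjugate to g}|. -/
/-- Let `G` be a finite group, `K ≤ G` and `g ∈ G`. For the action of `G` on the left
coset space `G/K` by left multiplication, the number of cosets fixed by `g`, times `|K|`,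
equals `|C_G(g)|` times the number of elements of `K` that are `G`-conjugate to `g`. -/
theorem card_fixed_cosets_mul_card_eq
    {G : Type*} [Group G] [Finite G] (K : Subgroup G) (g : G) :
    Nat.card {x : G ⧸ K | g • x = x} * Nat.card K =
      Nat.card (Subgroup.centralizer {g}) * Nat.card {k : K | IsConj g (k : G)} := by
  classical
  set S : Set G := {x : G | x⁻¹ * g * x ∈ K} with hS
  -- Step 1: LHS = Nat.card S
  have hpre : S = QuotientGroup.mk ⁻¹' {x : G ⧸ K | g • x = x} := by
    ext x
    simp only [hS, Set.mem_setOf_eq, Set.mem_preimage]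
    have : g • (QuotientGroup.mk x : G ⧸ K) = QuotientGroup.mk (g * x) := rfl
    rw [this, QuotientGroup.eq]
    constructor
    · intro h
      have := K.inv_mem h
      simpa [mul_assoc, mul_inv_rev] using this
    · intro h
      have := K.inv_mem h
      simpa [mul_assoc, mul_inv_rev] using this
  have h1 : Nat.card {x : G ⧸ K | g • x = x} * Nat.card K = Nat.card S := by
    rw [hpre, Nat.card_congr (QuotientGroup.preimageMkEquivSubgroupProdSet K _),
      Nat.card_prod, mul_comm]
  -- Step 2: representatives
  have hrep : ∀ t : {k : K | IsConj g (k : G)}, ∃ x : G, x⁻¹ * g * x = ((t : K) : G) := by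
    rintro ⟨⟨k, hk⟩, ht⟩
    obtain ⟨c, hc⟩ := isConj_iff.mp ht
    exact ⟨c⁻¹, by simpa [mul_assoc] using hc⟩
  choose rep hrep' using hrep
  -- Step 3: the bijection T × C(g) ≃ S
  have e : {k : K | IsConj g (k : G)} × (Subgroup.centralizer {g} : Subgroup G) ≃ S := by
    refine Equiv.ofBijective (fun p => ⟨(p.2 : G) * rep p.1, ?_⟩) ⟨?_, ?_⟩
    · have hz : (p.2 : G)⁻¹ * g * (p.2 : G) = g := by
        have := (Subgroup.mem_centralizer_singleton_iff).mp p.2.2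
        rw [mul_assoc, ← this, ← mul_assoc, inv_mul_cancel, one_mul]
      have : ((p.2 : G) * rep p.1)⁻¹ * g * ((p.2 : G) * rep p.1)
          = ((p.1 : K) : G) := by
        rw [mul_inv_rev]
        calc (rep p.1)⁻¹ * (p.2 : G)⁻¹ * g * ((p.2 : G) * rep p.1)
            = (rep p.1)⁻¹ * ((p.2 : G)⁻¹ * g * (p.2 : G)) * rep p.1 := by group
          _ = (rep p.1)⁻¹ * g * rep p.1 := by rw [hz]
          _ = ((p.1 : K) : G) := hrep' p.1
      simp only [hS, Set.mem_setOf_eq, this]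
      exact (p.1 : K).2
    · rintro ⟨t, z⟩ ⟨t', z'⟩ h
      have hx : (z : G) * rep t = (z' : G) * rep t' := congrArg Subtype.val h
      have hzc : (z : G)⁻¹ * g * (z : G) = g := by
        have := (Subgroup.mem_centralizer_singleton_iff).mp z.2
        rw [mul_assoc, ← this, ← mul_assoc, inv_mul_cancel, one_mul]
      have hzc' : (z' : G)⁻¹ * g * (z' : G) = g := by
        have := (Subgroup.mem_centralizer_singleton_iff).mp z'.2
        rw [mul_assoc, ← this, ← mul_assoc, inv_mul_cancel, one_mul]
      have key : ((t : K) : G) = ((t' : K) : G) := by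
        calc ((t : K) : G) = (rep t)⁻¹ * g * rep t := (hrep' t).symm
          _ = ((z : G) * rep t)⁻¹ * g * ((z : G) * rep t) := by
              rw [mul_inv_rev]
              calc (rep t)⁻¹ * g * rep t
                  = (rep t)⁻¹ * ((z : G)⁻¹ * g * (z : G)) * rep t := by rw [hzc]
                _ = (rep t)⁻¹ * (z : G)⁻¹ * g * ((z : G) * rep t) := by group
          _ = ((z' : G) * rep t')⁻¹ * g * ((z' : G) * rep t') := by rw [hx]
          _ = (rep t')⁻¹ * g * rep t' := by
              rw [mul_inv_rev]
              calc (rep t')⁻¹ * (z' : G)⁻¹ * g * ((z' : G) * rep t')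
                  = (rep t')⁻¹ * ((z' : G)⁻¹ * g * (z' : G)) * rep t' := by group
                _ = (rep t')⁻¹ * g * rep t' := by rw [hzc']
          _ = ((t' : K) : G) := hrep' t'
      have htt : t = t' := Subtype.ext (Subtype.ext key)
      subst htt
      have hzz : (z : G) = (z' : G) := by
        have := mul_right_cancel hx
        exact this
      exact Prod.ext rfl (Subtype.ext hzz)
    · rintro ⟨x, hx⟩
      simp only [hS, Set.mem_setOf_eq] at hx
      have hconj : IsConj g ((⟨x⁻¹ * g * x, hx⟩ : K) : G) := by
        rw [isConj_iff]
        exact ⟨x⁻¹, by group⟩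
      set t : {k : K | IsConj g (k : G)} := ⟨⟨x⁻¹ * g * x, hx⟩, hconj⟩ with hT
      have hrt : (rep t)⁻¹ * g * rep t = x⁻¹ * g * x := hrep' t
      have hzmem : x * (rep t)⁻¹ ∈ Subgroup.centralizer ({g} : Set G) := by
        rw [Subgroup.mem_centralizer_singleton_iff]
        have : g * x = x * ((rep t)⁻¹ * g * rep t) := by
          rw [hrt]; group
        calc x * (rep t)⁻¹ * g = x * ((rep t)⁻¹ * g * rep t) * (rep t)⁻¹ := by group
          _ = g * x * (rep t)⁻¹ := by rw [← this]
          _ = g * (x * (rep t)⁻¹) := by group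
      refine ⟨⟨t, ⟨x * (rep t)⁻¹, hzmem⟩⟩, ?_⟩
      apply Subtype.ext
      show x * (rep t)⁻¹ * rep t = x
      group
  have h2 : Nat.card S =
      Nat.card (Subgroup.centralizer ({g} : Set G)) * Nat.card {k : K | IsConj g (k : G)} := by
    rw [← Nat.card_congr e, Nat.card_prod, mul_comm]
  rw [h1, h2]
end

section
/- Let G be a finite group, K a subgroup of G, and g ∈ G. Suppose that the set of elements of K which are conjugate to g in G forms a single K-conjugacy class, with representative k ∈ K. Then the number of left cosets in G/K fixed by g (under left multiplication) equals |C_G(g)| / |C_K(k)|. -/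
/-- Let `G` be a finite group, `K ≤ G` and `g ∈ G`. Suppose the elements of `K` that are
`G`-conjugate to `g` form a single `K`-conjugacy class, with representative `k ∈ K`.
Then the number of left cosets of `K` fixed by `g` equals `|C_G(g)| / |C_K(k)|`. -/
theorem card_fixed_cosets_eq_centralizer_quotient
    {G : Type*} [Group G] [Finite G] (K : Subgroup G) (g : G) (k : K)
    (hk : IsConj g (k : G))
    (hclass : ∀ k' : K, IsConj g (k' : G) → IsConj k k') :
    Nat.card {x : G ⧸ K | g • x = x} =
      Nat.card (Subgroup.centralizer {g}) /
        Nat.card (Subgroup.centralizer ({k} : Set K)) := by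
  obtain ⟨d, hd⟩ := isConj_iff.mp hk
  set c : G := d⁻¹ with hcdef
  have hck : c⁻¹ * g * c = (k : G) := by rw [hcdef]; simpa using hd
  have hgc : g * c = c * (k : G) := by rw [← hck]; group
  set C := Subgroup.centralizer ({g} : Set G) with hC
  let p₀ : G ⧸ K := (c : G)
  -- the base point is fixed
  have hp₀ : g • p₀ = p₀ := by
    show ((g * c : G) : G ⧸ K) = ((c : G) : G ⧸ K)
    rw [hgc]
    exact QuotientGroup.mk_mul_of_mem c k.2
  -- orbit of p₀ under C equals the fixed set
  have horb : (MulAction.orbit C p₀ : Set (G ⧸ K)) = {x : G ⧸ K | g • x = x} := by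
    ext x
    constructor
    · rintro ⟨z, rfl⟩
      have hz : (z : G) * g = g * (z : G) :=
        (Subgroup.mem_centralizer_singleton_iff.mp z.2)
      show g • ((z : G) • p₀) = (z : G) • p₀
      rw [smul_smul, ← hz, ← smul_smul, hp₀]
    · intro hx
      obtain ⟨a, rfl⟩ := QuotientGroup.mk_surjective x
      have hmem : a⁻¹ * g * a ∈ K := by
        have : ((g * a : G) : G ⧸ K) = ((a : G) : G ⧸ K) := hx
        have h := QuotientGroup.eq.mp this
        have : a⁻¹ * g⁻¹ * a ∈ K := by
          simpa [mul_assoc] using h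
        simpa [mul_assoc] using K.inv_mem this
      set k' : K := ⟨a⁻¹ * g * a, hmem⟩ with hk'def
      have hconj : IsConj g (k' : G) := isConj_iff.mpr ⟨a⁻¹, by show a⁻¹ * g * a⁻¹⁻¹ = a⁻¹ * g * a; group⟩
      obtain ⟨u, hu⟩ := isConj_iff.mp (hclass k' hconj)
      have huG : (u : G) * (k : G) * (u : G)⁻¹ = (k' : G) := by
        exact_mod_cast congrArg (Subtype.val) hu
      have hk'G : (k' : G) = a⁻¹ * g * a := rfl
      set z : G := a * (u : G) * c⁻¹ with hzdef
      have key : z * g * z⁻¹ = g := by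
        calc z * g * z⁻¹
            = a * ((u : G) * (k : G) * (u : G)⁻¹) * a⁻¹ := by
              rw [hzdef, ← hck]; group
          _ = a * (a⁻¹ * g * a) * a⁻¹ := by rw [huG, hk'G]
          _ = g := by group
      have hzC : z ∈ C := by
        rw [hC, Subgroup.mem_centralizer_singleton_iff]
        exact mul_inv_eq_iff_eq_mul.mp key
      refine ⟨⟨z, hzC⟩, ?_⟩
      show ((z * c : G) : G ⧸ K) = ((a : G) : G ⧸ K)
      have : z * c = a * (u : G) := by rw [hzdef]; group
      rw [this]
      exact QuotientGroup.mk_mul_of_mem a u.2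
  -- stabilizer of p₀ in C is in bijection with C_K(k)
  have hstab : Nat.card (MulAction.stabilizer C p₀) =
      Nat.card (Subgroup.centralizer ({k} : Set K)) := by
    have hmemstab : ∀ z : C, z ∈ MulAction.stabilizer C p₀ ↔ c⁻¹ * (z : G) * c ∈ K := by
      intro z
      rw [MulAction.mem_stabilizer_iff]
      show ((((z : G) * c : G)) : G ⧸ K) = ((c : G) : G ⧸ K) ↔ _
      rw [QuotientGroup.eq]
      constructor
      · intro h
        have : ((z : G) * c)⁻¹ * c = c⁻¹ * (z : G)⁻¹ * c := by group
        rw [this] at h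
        simpa [mul_assoc] using K.inv_mem h
      · intro h
        have h2 := K.inv_mem h
        have : (c⁻¹ * (z : G) * c)⁻¹ = ((z : G) * c)⁻¹ * c := by group
        rwa [this] at h2
    refine Nat.card_congr (Equiv.ofBijective
      (fun z => ⟨⟨c⁻¹ * ((z : C) : G) * c, (hmemstab ↑z).mp z.2⟩, ?_⟩) ⟨?_, ?_⟩)
    · -- lands in the centralizer of k in K
      rename_i z
      rw [Subgroup.mem_centralizer_singleton_iff]
      apply Subtype.ext
      push_cast
      have hz : ((z : C) : G) * g = g * ((z : C) : G) :=
        Subgroup.mem_centralizer_singleton_iff.mp (z : C).2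
      rw [← hck]
      calc c⁻¹ * ((z : C) : G) * c * (c⁻¹ * g * c)
          = c⁻¹ * (((z : C) : G) * g) * c := by group
        _ = c⁻¹ * (g * ((z : C) : G)) * c := by rw [hz]
        _ = c⁻¹ * g * c * (c⁻¹ * ((z : C) : G) * c) := by group
    · -- injective
      intro z w h
      have h1 : c⁻¹ * ((z : C) : G) * c = c⁻¹ * ((w : C) : G) * c := by
        simpa using congrArg (fun v : Subgroup.centralizer ({k} : Set K) => ((v : K) : G)) h
      have : ((z : C) : G) = ((w : C) : G) := by
        have := congrArg (fun t => c * t * c⁻¹) h1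
        simpa [mul_assoc] using this
      exact Subtype.ext (Subtype.ext this)
    · -- surjective
      intro v
      have hvK : ((v : K) : G) ∈ K := (v : K).2
      have hvk : ((v : K) : G) * (k : G) = (k : G) * ((v : K) : G) := by
        exact_mod_cast congrArg (Subtype.val)
          (Subgroup.mem_centralizer_singleton_iff.mp v.2)
      set z : G := c * ((v : K) : G) * c⁻¹ with hzdef
      have hzC : z ∈ C := by
        rw [hC, Subgroup.mem_centralizer_singleton_iff]
        rw [← hck] at hvk
        calc z * g
            = c * (((v : K) : G) * (c⁻¹ * g * c)) * c⁻¹ := by rw [hzdef]; group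
          _ = c * ((c⁻¹ * g * c) * ((v : K) : G)) * c⁻¹ := by rw [hvk]
          _ = g * z := by rw [hzdef]; group
      have hzg : z * g = g * z := by
        have := hzC
        rwa [hC, Subgroup.mem_centralizer_singleton_iff] at this
      have hzstab : (⟨z, hzC⟩ : C) ∈ MulAction.stabilizer C p₀ := by
        rw [hmemstab]
        show c⁻¹ * z * c ∈ K
        have : c⁻¹ * z * c = ((v : K) : G) := by rw [hzdef]; group
        rw [this]; exact hvK
      refine ⟨⟨⟨z, hzC⟩, hzstab⟩, ?_⟩
      apply Subtype.ext
      apply Subtype.ext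
      show c⁻¹ * z * c = ((v : K) : G)
      rw [hzdef]; group
  -- put everything together via orbit–stabilizer
  have hcardorb : Nat.card {x : G ⧸ K | g • x = x} =
      (MulAction.stabilizer C p₀).index := by
    rw [← horb]
    exact Nat.card_congr (MulAction.orbitEquivQuotientStabilizer C p₀)
  have hos := Subgroup.card_mul_index (MulAction.stabilizer C p₀)
  rw [hstab] at hos
  have hpos : 0 < Nat.card (Subgroup.centralizer ({k} : Set K)) := Nat.card_pos
  rw [hcardorb, ← hos, Nat.mul_div_cancel_left _ hpos]
end
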